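/- Two fibered morphisms F, G : R^q × R^p → R^q × R^p (over the same base maps) have the same (R,S,Q)-jet at y (with R ≤ min(S,Q)) if and only if they have (S,Q)-multiorder contact modulo the multifoliation {F₁, F₂} at y together with the same R-jet at y; in particular equality of the (S,Q)-jet modulo {F₁,F₂} follows from equality of the (R,S,Q)-jet. -/

import Mathlib

private lemma aux_fst_comp {q p : ℕ}
    (H : (Fin q → ℝ) × (Fin p → ℝ) → (Fin q → ℝ) × (Fin p → ℝ))
    (H₀ : (Fin q → ℝ) → (Fin q → ℝ)) (hH₀ : ContDiff ℝ (⊤ : ℕ∞) H₀)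
    (hHb : ∀ z, (H z).1 = H₀ z.1) (s : ℕ) (y₀ : (Fin q → ℝ) × (Fin p → ℝ)) :
    iteratedFDeriv ℝ s (fun z => (H z).1) y₀ =
      (iteratedFDeriv ℝ s H₀ y₀.1).compContinuousLinearMap
        (fun _ => ContinuousLinearMap.fst ℝ (Fin q → ℝ) (Fin p → ℝ)) := by
  have h1 : (fun z => (H z).1) =
      (H₀ ∘ (ContinuousLinearMap.fst ℝ (Fin q → ℝ) (Fin p → ℝ))) := by
    funext z; exact hHb z
  rw [h1]
  exact (ContinuousLinearMap.fst ℝ (Fin q → ℝ) (Fin p → ℝ)).iteratedFDeriv_comp_right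
    hH₀ y₀ (by exact_mod_cast le_top)

private lemma aux_fiber {q p : ℕ}
    (h : (Fin p → ℝ) → (Fin q → ℝ) × (Fin p → ℝ)) (c : Fin q → ℝ)
    (hc : ∀ v, (h v).1 = c) (hh : ContDiff ℝ (⊤ : ℕ∞) h) {s : ℕ} (hs : s ≠ 0)
    (w : Fin p → ℝ) :
    iteratedFDeriv ℝ s h w =
      (ContinuousLinearMap.inr ℝ (Fin q → ℝ) (Fin p → ℝ)).compContinuousMultilinearMap
        (iteratedFDeriv ℝ s (fun v => (h v).2) w) := by
  have hsnd : ContDiff ℝ (⊤ : ℕ∞) (fun v => (h v).2) := contDiff_snd.comp hh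
  have hdecomp : h = (⇑(ContinuousLinearMap.inr ℝ (Fin q → ℝ) (Fin p → ℝ)) ∘ fun v => (h v).2)
      + (fun _ => ((c, 0) : (Fin q → ℝ) × (Fin p → ℝ))) := by
    funext v
    simp only [Pi.add_apply, Function.comp_apply, ContinuousLinearMap.inr_apply,
      Prod.mk_add_mk, zero_add, add_zero]
    exact Prod.ext (hc v) rfl
  conv_lhs => rw [hdecomp]
  rw [iteratedFDeriv_add_apply
      (((ContinuousLinearMap.inr ℝ (Fin q → ℝ) (Fin p → ℝ)).contDiff.comp hsnd).of_le
        (by exact_mod_cast le_top)).contDiffAt contDiff_const.contDiffAt,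
    iteratedFDeriv_const_of_ne hs, Pi.zero_apply, add_zero]
  exact (ContinuousLinearMap.inr ℝ (Fin q → ℝ) (Fin p → ℝ)).iteratedFDeriv_comp_left
    (hsnd.contDiffAt (x := w)) (by exact_mod_cast le_top)

/-- For fibered morphisms `F, G : ℝ^q × ℝ^p → ℝ^q × ℝ^p` (over base maps `F₀, G₀`),
with `R ≤ min (S, Q)`: `F` and `G` have the same `(R,S,Q)`-jet at `y₀` (same
`R`-jet, same `S`-jet of the fiber restrictions, same `Q`-jet of the base maps)
iff they have `(S,Q)`-multiorder contact at `y₀` modulo the multifoliation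
`{F₁, F₂}` of `ℝ^q × ℝ^p` (order-`S` contact of the `α² = snd` components along
the fiber, order-`Q` contact of the `α¹ = fst` components) together with the
same `R`-jet at `y₀`. In particular, equality of `(R,S,Q)`-jets implies equality
of the `(S,Q)`-jets modulo `{F₁, F₂}`. -/
theorem RSQjet_iff_SQjet_mod_multifoliation (q p R S Q : ℕ)
    (hRS : R ≤ S) (hRQ : R ≤ Q)
    (F G : (Fin q → ℝ) × (Fin p → ℝ) → (Fin q → ℝ) × (Fin p → ℝ))
    (F₀ G₀ : (Fin q → ℝ) → (Fin q → ℝ))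
    (hF : ContDiff ℝ (⊤ : ℕ∞) F) (hG : ContDiff ℝ (⊤ : ℕ∞) G)
    (hF₀ : ContDiff ℝ (⊤ : ℕ∞) F₀) (hG₀ : ContDiff ℝ (⊤ : ℕ∞) G₀)
    (hFb : ∀ z, (F z).1 = F₀ z.1) (hGb : ∀ z, (G z).1 = G₀ z.1)
    (y₀ : (Fin q → ℝ) × (Fin p → ℝ)) :
    ((∀ s ≤ R, iteratedFDeriv ℝ s F y₀ = iteratedFDeriv ℝ s G y₀) ∧
     (∀ s ≤ S, iteratedFDeriv ℝ s (fun v => F (y₀.1, v)) y₀.2 =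
                iteratedFDeriv ℝ s (fun v => G (y₀.1, v)) y₀.2) ∧
     (∀ s ≤ Q, iteratedFDeriv ℝ s F₀ y₀.1 = iteratedFDeriv ℝ s G₀ y₀.1)) ↔
    ((∀ s ≤ R, iteratedFDeriv ℝ s F y₀ = iteratedFDeriv ℝ s G y₀) ∧
     (∀ s ≤ S, iteratedFDeriv ℝ s (fun v => (F (y₀.1, v)).2) y₀.2 =
                iteratedFDeriv ℝ s (fun v => (G (y₀.1, v)).2) y₀.2) ∧
     (∀ s ≤ Q, iteratedFDeriv ℝ s (fun z => (F z).1) y₀ =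
                iteratedFDeriv ℝ s (fun z => (G z).1) y₀)) := by
  have hFfib : ContDiff ℝ (⊤ : ℕ∞) (fun v => F (y₀.1, v)) :=
    hF.comp (contDiff_const.prodMk contDiff_id)
  have hGfib : ContDiff ℝ (⊤ : ℕ∞) (fun v => G (y₀.1, v)) :=
    hG.comp (contDiff_const.prodMk contDiff_id)
  constructor
  · rintro ⟨hR, hFib, hB⟩
    refine ⟨hR, fun s hs => ?_, fun s hs => ?_⟩
    · have h1 := (ContinuousLinearMap.snd ℝ (Fin q → ℝ) (Fin p → ℝ)).iteratedFDeriv_comp_left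
        (hFfib.contDiffAt (x := y₀.2)) (i := s) (by exact_mod_cast le_top)
      have h2 := (ContinuousLinearMap.snd ℝ (Fin q → ℝ) (Fin p → ℝ)).iteratedFDeriv_comp_left
        (hGfib.contDiffAt (x := y₀.2)) (i := s) (by exact_mod_cast le_top)
      have e1 : (fun v => (F (y₀.1, v)).2) =
          (ContinuousLinearMap.snd ℝ (Fin q → ℝ) (Fin p → ℝ)) ∘ (fun v => F (y₀.1, v)) := rfl
      have e2 : (fun v => (G (y₀.1, v)).2) =
          (ContinuousLinearMap.snd ℝ (Fin q → ℝ) (Fin p → ℝ)) ∘ (fun v => G (y₀.1, v)) := rfl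
      rw [e1, e2, h1, h2, hFib s hs]
    · rw [aux_fst_comp F F₀ hF₀ hFb s y₀, aux_fst_comp G G₀ hG₀ hGb s y₀, hB s hs]
  · rintro ⟨hR, hSnd, hFst⟩
    have hval : F y₀ = G y₀ := by
      have h0 := hR 0 (Nat.zero_le R)
      have := congrFun (congrArg DFunLike.coe h0) (fun i => 0)
      simpa using this
    have hc : F₀ y₀.1 = G₀ y₀.1 := by
      rw [← hFb y₀, ← hGb y₀, hval]
    refine ⟨hR, fun s hs => ?_, fun s hs => ?_⟩
    · rcases Nat.eq_zero_or_pos s with h0 | hpos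
      · subst h0
        refine ContinuousMultilinearMap.ext fun m => ?_
        rw [iteratedFDeriv_zero_apply, iteratedFDeriv_zero_apply, Prod.mk.eta, hval]
      · rw [aux_fiber (fun v => F (y₀.1, v)) (F₀ y₀.1) (fun v => hFb (y₀.1, v)) hFfib
          (Nat.pos_iff_ne_zero.mp hpos) y₀.2,
          aux_fiber (fun v => G (y₀.1, v)) (G₀ y₀.1) (fun v => hGb (y₀.1, v)) hGfib
          (Nat.pos_iff_ne_zero.mp hpos) y₀.2, hSnd s hs]
    · have h := hFst s hs
      rw [aux_fst_comp F F₀ hF₀ hFb s y₀, aux_fst_comp G G₀ hG₀ hGb s y₀] at h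
      refine ContinuousMultilinearMap.ext fun m => ?_
      have := congrFun (congrArg DFunLike.coe h)
        (fun i => (ContinuousLinearMap.inl ℝ (Fin q → ℝ) (Fin p → ℝ)) (m i))
      simpa using this
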